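/- For every ℚ-vector space V, the canonical ℤ-linear map from the second exterior power of V regarded as a ℤ-module to the second exterior power of V over ℚ, determined on generators by v ∧_ℤ w ↦ v ∧_ℚ w, is bijective. In particular, Λ²_ℤ ℂ → Λ²_ℚ ℂ is an isomorphism. -/

import Mathlib

/-- The wedge product `v ∧ w` of two elements of an `R`-module `V`, as an element of
the second exterior power `⋀[R]^2 V`. -/
noncomputable def wedge (R : Type*) [CommRing R] {V : Type*} [AddCommGroup V]
    [Module R V] (v w : V) : ⋀[R]^2 V :=
  ⟨ExteriorAlgebra.ιMulti R 2 ![v, w],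
    ExteriorAlgebra.ιMulti_range R 2 ⟨![v, w], rfl⟩⟩

section Aux

open ExteriorAlgebra

/-- The wedge as an alternating map into the second exterior power. -/
noncomputable def wedgeAlt (R : Type*) [CommRing R] (V : Type*) [AddCommGroup V]
    [Module R V] : V [⋀^Fin 2]→ₗ[R] (⋀[R]^2 V) :=
  (ExteriorAlgebra.ιMulti R 2).codRestrict (⋀[R]^2 V)
    (fun v => ExteriorAlgebra.ιMulti_range R 2 ⟨v, rfl⟩)

variable {R : Type*} [CommRing R] {V : Type*} [AddCommGroup V] [Module R V]

lemma wedgeAlt_apply (v w : V) : wedgeAlt R V ![v, w] = wedge R v w := rfl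

lemma pair_eta (m : Fin 2 → V) : ![m 0, m 1] = m := by
  funext i; fin_cases i <;> rfl

lemma update_pair_zero (m : Fin 2 → V) (x : V) [DecidableEq (Fin 2)] :
    Function.update m 0 x = ![x, m 1] := by
  funext i; fin_cases i <;> simp [Function.update]

lemma update_pair_one (m : Fin 2 → V) (x : V) [DecidableEq (Fin 2)] :
    Function.update m 1 x = ![m 0, x] := by
  funext i; fin_cases i <;> simp [Function.update]

lemma wedge_add_left (v v' w : V) :
    wedge R (v + v') w = wedge R v w + wedge R v' w := by
  have h := (wedgeAlt R V).map_update_add ![v, w] 0 v v'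
  simpa [update_pair_zero, wedgeAlt_apply] using h

lemma wedge_add_right (v w w' : V) :
    wedge R v (w + w') = wedge R v w + wedge R v w' := by
  have h := (wedgeAlt R V).map_update_add ![v, w] 1 w w'
  simpa [update_pair_one, wedgeAlt_apply] using h

lemma wedge_smul_left (r : R) (v w : V) :
    wedge R (r • v) w = r • wedge R v w := by
  have h := (wedgeAlt R V).map_update_smul ![v, w] 0 r v
  simpa [update_pair_zero, wedgeAlt_apply] using h

lemma wedge_smul_right (r : R) (v w : V) :
    wedge R v (r • w) = r • wedge R v w := by
  have h := (wedgeAlt R V).map_update_smul ![v, w] 1 r w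
  simpa [update_pair_one, wedgeAlt_apply] using h

lemma wedge_self (v : V) : wedge R v v = 0 := by
  have h := (wedgeAlt R V).map_eq_zero_of_eq ![v, v] (i := 0) (j := 1)
    (by simp) (by decide)
  simpa [wedgeAlt_apply] using h

/-- Extensionality for `ℤ`-linear maps out of `⋀[ℤ]^2 V`, from agreement on wedges. -/
lemma wedge_ext {N : Type*} [AddCommGroup N] [Module ℤ N]
    {f g : (⋀[ℤ]^2 V) →ₗ[ℤ] N}
    (h : ∀ v w : V, f (wedge ℤ v w) = g (wedge ℤ v w)) : f = g := by
  apply LinearMap.ext; intro x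
  obtain ⟨x, hx⟩ := x
  have hx' : x ∈ Submodule.span ℤ (Set.range (ιMulti ℤ 2 (M := V))) := by
    rw [ιMulti_span_fixedDegree]; exact hx
  revert hx
  refine Submodule.span_induction
    (p := fun y _ => ∀ hy : y ∈ ⋀[ℤ]^2 V, f ⟨y, hy⟩ = g ⟨y, hy⟩)
    ?_ ?_ ?_ ?_ hx'
  · rintro y ⟨m, rfl⟩ hy
    have e : (⟨ιMulti ℤ 2 m, hy⟩ : ⋀[ℤ]^2 V) = wedge ℤ (m 0) (m 1) := by
      apply Subtype.ext
      show ιMulti ℤ 2 m = ιMulti ℤ 2 ![m 0, m 1]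
      rw [pair_eta]
    rw [e]; exact h _ _
  · intro hy
    have e : (⟨0, hy⟩ : ⋀[ℤ]^2 V) = 0 := rfl
    rw [e, map_zero, map_zero]
  · intro y z hys hzs hy hz hyz
    have hy2 : y ∈ ⋀[ℤ]^2 V := by rw [← ιMulti_span_fixedDegree]; exact hys
    have hz2 : z ∈ ⋀[ℤ]^2 V := by rw [← ιMulti_span_fixedDegree]; exact hzs
    have e : (⟨y + z, hyz⟩ : ⋀[ℤ]^2 V) = ⟨y, hy2⟩ + ⟨z, hz2⟩ := rfl
    rw [e, map_add, map_add, hy hy2, hz hz2]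
  · intro n y hys hy hny
    have hy2 : y ∈ ⋀[ℤ]^2 V := by rw [← ιMulti_span_fixedDegree]; exact hys
    have e : (⟨n • y, hny⟩ : ⋀[ℤ]^2 V) = n • ⟨y, hy2⟩ := rfl
    rw [e, LinearMap.map_smul, LinearMap.map_smul, hy hy2]

end Aux

section Rat

open ExteriorAlgebra

variable {V : Type*} [AddCommGroup V] [Module ℚ V]

/-- rational scalar decomposition: `q • v = q.num • ((q.den)⁻¹ • v)` with `ℤ`-smul. -/
lemma rat_smul_decomp (q : ℚ) (v : V) :
    q • v = (q.num : ℤ) • (((q.den : ℚ))⁻¹ • v) := by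
  conv_lhs => rw [← Rat.num_div_den q]
  rw [div_eq_mul_inv, mul_smul, Int.cast_smul_eq_zsmul]

lemma den_smul_inv (q : ℚ) (v : V) :
    (q.den : ℤ) • (((q.den : ℚ))⁻¹ • v) = v := by
  rw [← Int.cast_smul_eq_zsmul ℚ, smul_smul]
  have hd : ((q.den : ℚ)) ≠ 0 := by exact_mod_cast q.den_ne_zero
  push_cast
  rw [mul_inv_cancel₀ hd, one_smul]

lemma wedgeZ_rat_smul_comm (q : ℚ) (v w : V) :
    wedge ℤ (q • v) w = wedge ℤ v (q • w) := by
  set v' := ((q.den : ℚ))⁻¹ • v with hv'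
  set w' := ((q.den : ℚ))⁻¹ • w with hw'
  calc wedge ℤ (q • v) w
      = wedge ℤ ((q.num : ℤ) • v') ((q.den : ℤ) • w') := by
        rw [rat_smul_decomp q v, den_smul_inv q w]
    _ = (q.num * q.den : ℤ) • wedge ℤ v' w' := by
        rw [wedge_smul_left, wedge_smul_right, smul_smul]
    _ = wedge ℤ ((q.den : ℤ) • v') ((q.num : ℤ) • w') := by
        rw [wedge_smul_left, wedge_smul_right, smul_smul, mul_comm]
    _ = wedge ℤ v (q • w) := by
        rw [den_smul_inv q v, rat_smul_decomp q w]

lemma wedgeZ_rat_smul_self (q : ℚ) (v : V) :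
    wedge ℤ (q • v) v = 0 := by
  rw [rat_smul_decomp q v]
  nth_rewrite 2 [← den_smul_inv q v]
  rw [wedge_smul_left, wedge_smul_right, wedge_self, smul_zero, smul_zero]

/-- Scalar multiplication by `q : ℚ` on `V` as a `ℤ`-linear map. -/
def qSmulMap (q : ℚ) : V →ₗ[ℤ] V where
  toFun v := q • v
  map_add' x y := smul_add q x y
  map_smul' n x := smul_comm q n x

/-- The `ℤ`-alternating map `(v, w) ↦ (q • v) ∧ w` into `⋀[ℤ]^2 V`. -/
noncomputable def Bq (q : ℚ) : V [⋀^Fin 2]→ₗ[ℤ] (⋀[ℤ]^2 V) where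
  toMultilinearMap :=
    (wedgeAlt ℤ V).toMultilinearMap.compLinearMap ![qSmulMap q, LinearMap.id]
  map_eq_zero_of_eq' := by
    intro m i j hm hij
    show wedgeAlt ℤ V (fun k => (![qSmulMap q, LinearMap.id] k) (m k)) = 0
    have e : (fun k => (![qSmulMap q, LinearMap.id] k) (m k)) = ![q • m 0, m 1] := by
      funext k; fin_cases k <;> rfl
    rw [e, wedgeAlt_apply]
    fin_cases i <;> fin_cases j
    · exact absurd rfl hij
    · rw [show m 0 = m 1 from hm]; exact wedgeZ_rat_smul_self q (m 1)
    · rw [show m 1 = m 0 from hm]; exact wedgeZ_rat_smul_self q (m 0)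
    · exact absurd rfl hij

/-- The `ℤ`-linear endomorphism of `⋀[ℤ]^2 V` given on generators by
`v ∧ w ↦ (q • v) ∧ w`. -/
noncomputable def qAct (q : ℚ) : (⋀[ℤ]^2 V) →ₗ[ℤ] (⋀[ℤ]^2 V) :=
  (liftAlternating (R := ℤ) (M := V) (N := ⋀[ℤ]^2 V)
    (Function.update 0 2 (Bq q))).comp (⋀[ℤ]^2 V).subtype

lemma sq_wedge (q : ℚ) (v w : V) :
    qAct q (wedge ℤ v w) = wedge ℤ (q • v) w := by
  show liftAlternating _ (ιMulti ℤ 2 ![v, w]) = _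
  rw [liftAlternating_apply_ιMulti, Function.update_self]
  show wedgeAlt ℤ V (fun k => (![qSmulMap q, LinearMap.id] k) (![v, w] k)) = _
  have e : (fun k => (![qSmulMap q, LinearMap.id] k) (![v, w] k)) = ![q • v, w] := by
    funext k; fin_cases k <;> rfl
  rw [e, wedgeAlt_apply]

lemma qAct_one : qAct (1 : ℚ) = (LinearMap.id : (⋀[ℤ]^2 V) →ₗ[ℤ] ⋀[ℤ]^2 V) :=
  wedge_ext fun v w => by rw [sq_wedge, one_smul]; rfl

lemma qAct_mul (a b : ℚ) : qAct (a * b) = ((qAct a).comp (qAct b) : (⋀[ℤ]^2 V) →ₗ[ℤ] ⋀[ℤ]^2 V) :=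
  wedge_ext fun v w => by
    rw [sq_wedge, LinearMap.comp_apply, sq_wedge, sq_wedge, mul_smul a b v]

lemma qAct_add (a b : ℚ) : qAct (a + b) = (qAct a + qAct b : (⋀[ℤ]^2 V) →ₗ[ℤ] ⋀[ℤ]^2 V) :=
  wedge_ext fun v w => by
    rw [sq_wedge, LinearMap.add_apply, sq_wedge, sq_wedge, add_smul a b v, wedge_add_left]

lemma qAct_zero : qAct (0 : ℚ) = (0 : (⋀[ℤ]^2 V) →ₗ[ℤ] ⋀[ℤ]^2 V) :=
  wedge_ext fun v w => by
    rw [sq_wedge, zero_smul ℚ v]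
    have e : wedge ℤ (0 : V) w = wedge ℤ ((0 : ℤ) • (0 : V)) w := by rw [zero_smul]
    rw [e, wedge_smul_left, zero_smul]; rfl

lemma qAct_intCast (n : ℤ) : qAct ((n : ℚ)) = (n • LinearMap.id : (⋀[ℤ]^2 V) →ₗ[ℤ] ⋀[ℤ]^2 V) :=
  wedge_ext fun v w => by
    rw [sq_wedge, Int.cast_smul_eq_zsmul, wedge_smul_left]
    simp

/-- The `ℚ`-module structure on `⋀[ℤ]^2 V`. -/
noncomputable def ratModule : Module ℚ (⋀[ℤ]^2 V) where
  smul q x := qAct q x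
  one_smul x := LinearMap.congr_fun qAct_one x
  mul_smul a b x := LinearMap.congr_fun (qAct_mul a b) x
  smul_zero a := map_zero (qAct a)
  smul_add a x y := map_add (qAct a) x y
  add_smul a b x := LinearMap.congr_fun (qAct_add a b) x
  zero_smul x := LinearMap.congr_fun qAct_zero x

attribute [local instance] ratModule

lemma ratModule_smul_wedge (q : ℚ) (v w : V) :
    q • wedge ℤ v w = wedge ℤ (q • v) w := sq_wedge q v w

lemma ratModule_smul_def (q : ℚ) (x : ⋀[ℤ]^2 V) : q • x = qAct q x := rfl

lemma ratModule_intCast_smul (n : ℤ) (x : ⋀[ℤ]^2 V) :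
    ((n : ℚ)) • x = n • x := by
  have h := LinearMap.congr_fun (qAct_intCast (V := V) n) x
  rw [ratModule_smul_def]
  simpa using h

instance : IsScalarTower ℤ ℚ (⋀[ℤ]^2 V) := by
  constructor
  intro n q x
  have e : (n • q) = ((n : ℚ)) * q := zsmul_eq_mul q n
  rw [e, ratModule_smul_def, ratModule_smul_def, LinearMap.congr_fun (qAct_mul ((n : ℚ)) q) x]
  show qAct ((n : ℚ)) (qAct q x) = n • qAct q x
  rw [← ratModule_smul_def, ratModule_intCast_smul]

/-- The wedge over `ℤ` as a `ℚ`-alternating map into `⋀[ℤ]^2 V`. -/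
noncomputable def AQ : V [⋀^Fin 2]→ₗ[ℚ] (⋀[ℤ]^2 V) where
  toFun := wedgeAlt ℤ V
  map_update_add' m i x y := (wedgeAlt ℤ V).map_update_add m i x y
  map_update_smul' m i c x := by
    fin_cases i
    · show (wedgeAlt ℤ V) (Function.update m 0 (c • x)) =
        c • (wedgeAlt ℤ V) (Function.update m 0 x)
      rw [update_pair_zero, update_pair_zero, wedgeAlt_apply, wedgeAlt_apply,
        ratModule_smul_wedge]
    · show (wedgeAlt ℤ V) (Function.update m 1 (c • x)) =
        c • (wedgeAlt ℤ V) (Function.update m 1 x)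
      rw [update_pair_one, update_pair_one, wedgeAlt_apply, wedgeAlt_apply,
        ratModule_smul_wedge, wedgeZ_rat_smul_comm]
  map_eq_zero_of_eq' := (wedgeAlt ℤ V).map_eq_zero_of_eq'

/-- The `ℤ`-linear map `⋀[ℚ]^2 V → ⋀[ℤ]^2 V`, `v ∧_ℚ w ↦ v ∧_ℤ w`. -/
noncomputable def gZ : (⋀[ℚ]^2 V) →ₗ[ℤ] (⋀[ℤ]^2 V) where
  toFun x := liftAlternating (R := ℚ) (M := V) (N := ⋀[ℤ]^2 V)
    (Function.update 0 2 AQ) x.1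
  map_add' x y := by
    rw [Submodule.coe_add, map_add]
  map_smul' n x := by
    have e : ((n • x : ⋀[ℚ]^2 V) : ExteriorAlgebra ℚ V)
        = (n : ℚ) • (x : ExteriorAlgebra ℚ V) := by
      rw [Submodule.coe_smul_of_tower, ← Int.cast_smul_eq_zsmul ℚ]
    rw [e, map_smul, ratModule_intCast_smul]
    rfl

lemma gZ_wedge (v w : V) : gZ (wedge ℚ v w) = wedge ℤ v w := by
  show liftAlternating _ (ιMulti ℚ 2 ![v, w]) = _
  rw [liftAlternating_apply_ιMulti, Function.update_self]
  exact wedgeAlt_apply v w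

/-- Scalar multiplication by `q : ℚ` on `⋀[ℚ]^2 V` as a `ℤ`-linear map. -/
def qSmulQ (q : ℚ) : (⋀[ℚ]^2 V) →ₗ[ℤ] (⋀[ℚ]^2 V) where
  toFun x := q • x
  map_add' x y := smul_add q x y
  map_smul' n x := smul_comm q n x

/-- Any `ℤ`-linear map with the generator property is bijective. -/
lemma bijective_of_wedge_prop (f : (⋀[ℤ]^2 V) →ₗ[ℤ] (⋀[ℚ]^2 V))
    (hf : ∀ v w : V, f (wedge ℤ v w) = wedge ℚ v w) : Function.Bijective f := by
  constructor
  · -- injective: gZ is a left inverse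
    have h : gZ.comp f = LinearMap.id :=
      wedge_ext fun v w => by
        rw [LinearMap.comp_apply, hf, gZ_wedge]; rfl
    intro x y hxy
    have := congrArg gZ hxy
    rwa [show gZ (f x) = x from LinearMap.congr_fun h x,
      show gZ (f y) = y from LinearMap.congr_fun h y] at this
  · -- surjective
    have hq : ∀ (q : ℚ) (u : ⋀[ℤ]^2 V), f (qAct q u) = q • f u := by
      intro q u
      have h : f.comp (qAct q) = (qSmulQ q).comp f :=
        wedge_ext fun v w => by
          rw [LinearMap.comp_apply, LinearMap.comp_apply, sq_wedge, hf, hf]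
          show wedge ℚ (q • v) w = q • wedge ℚ v w
          rw [wedge_smul_left]
      exact LinearMap.congr_fun h u
    intro x
    obtain ⟨x, hx⟩ := x
    have hx' : x ∈ Submodule.span ℚ (Set.range (ιMulti ℚ 2 (M := V))) := by
      rw [ιMulti_span_fixedDegree]; exact hx
    revert hx
    refine Submodule.span_induction
      (p := fun y _ => ∀ hy : y ∈ ⋀[ℚ]^2 V,
        ∃ u, f u = (⟨y, hy⟩ : ⋀[ℚ]^2 V)) ?_ ?_ ?_ ?_ hx'
    · rintro y ⟨m, rfl⟩ hy
      refine ⟨wedge ℤ (m 0) (m 1), ?_⟩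
      rw [hf]
      apply Subtype.ext
      show ιMulti ℚ 2 ![m 0, m 1] = ιMulti ℚ 2 m
      rw [pair_eta]
    · intro hy
      exact ⟨0, by rw [map_zero]; rfl⟩
    · intro y z hys hzs hy hz hyz
      have hy2 : y ∈ ⋀[ℚ]^2 V := by rw [← ιMulti_span_fixedDegree]; exact hys
      have hz2 : z ∈ ⋀[ℚ]^2 V := by rw [← ιMulti_span_fixedDegree]; exact hzs
      obtain ⟨u, hu⟩ := hy hy2
      obtain ⟨u', hu'⟩ := hz hz2
      refine ⟨u + u', ?_⟩
      rw [map_add, hu, hu']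
      rfl
    · intro q y hys hy hqy
      have hy2 : y ∈ ⋀[ℚ]^2 V := by rw [← ιMulti_span_fixedDegree]; exact hys
      obtain ⟨u, hu⟩ := hy hy2
      refine ⟨qAct q u, ?_⟩
      rw [hq q u, hu]
      apply Subtype.ext
      rfl

/-- The `ℤ`-alternating map `(v, w) ↦ v ∧_ℚ w` into `⋀[ℚ]^2 V`. -/
noncomputable def BQ : V [⋀^Fin 2]→ₗ[ℤ] (⋀[ℚ]^2 V) where
  toMultilinearMap := (wedgeAlt ℚ V).toMultilinearMap.restrictScalars ℤ
  map_eq_zero_of_eq' := (wedgeAlt ℚ V).map_eq_zero_of_eq'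

/-- The canonical `ℤ`-linear map `⋀[ℤ]^2 V → ⋀[ℚ]^2 V`. -/
noncomputable def f₀ : (⋀[ℤ]^2 V) →ₗ[ℤ] (⋀[ℚ]^2 V) :=
  (liftAlternating (R := ℤ) (M := V) (N := ⋀[ℚ]^2 V)
    (Function.update 0 2 BQ)).comp (⋀[ℤ]^2 V).subtype

lemma f₀_wedge (v w : V) : f₀ (wedge ℤ v w) = wedge ℚ v w := by
  show liftAlternating _ (ιMulti ℤ 2 ![v, w]) = _
  rw [liftAlternating_apply_ιMulti, Function.update_self]
  rfl

end Rat

/-- For a `ℚ`-vector space `V`, the canonical `ℤ`-linear map `Λ²_ℤ V → Λ²_ℚ V`,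
determined on generators by `v ∧_ℤ w ↦ v ∧_ℚ w`, exists and is bijective (and any
`ℤ`-linear map with this generator property is bijective). -/
theorem exteriorPower_int_to_rat_bijective (V : Type*) [AddCommGroup V] [Module ℚ V] :
    (∃ f : (⋀[ℤ]^2 V) →ₗ[ℤ] (⋀[ℚ]^2 V),
      (∀ v w : V, f (wedge ℤ v w) = wedge ℚ v w) ∧ Function.Bijective f) ∧
    (∀ f : (⋀[ℤ]^2 V) →ₗ[ℤ] (⋀[ℚ]^2 V),
      (∀ v w : V, f (wedge ℤ v w) = wedge ℚ v w) → Function.Bijective f) := by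
  constructor
  · exact ⟨f₀, fun v w => f₀_wedge v w,
      bijective_of_wedge_prop f₀ (fun v w => f₀_wedge v w)⟩
  · exact fun f hf => bijective_of_wedge_prop f hf
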